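/- (Lemma 1, attainment at the closed-form auxiliary variables of eq. (12).) Let f ∈ ℂᴸ, let w₁, …, w_K ∈ ℂᴸ, let k ∈ {1,…,K}, and let σ > 0. Define α* = |fᴴw_k|² / (Σ_{j≠k} |fᴴw_j|² + σ²) and β* = √(1+α*)·fᴴw_k / (Σ_{j=1}^{K} |fᴴw_j|² + σ²). Then 2√(1+α*)·Re(conj(β*)·fᴴw_k) − α* − |β*|²·(Σ_{j=1}^{K} |fᴴw_j|² + σ²) + log(1+α*) = log(1 + |fᴴw_k|² / (Σ_{j≠k} |fᴴw_j|² + σ²)). -/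

import Mathlib

set_option maxHeartbeats 1000000


open Complex Finset

/-- The standard inner product `uᴴ v = ∑ ℓ conj(u ℓ) * v ℓ` on `ℂᴸ`. -/
noncomputable def dotc {L : ℕ} (u v : Fin L → ℂ) : ℂ := ∑ l, (starRingEnd ℂ) (u l) * v l

theorem stmt_6 {L K : ℕ} (f : Fin L → ℂ) (w : Fin K → Fin L → ℂ) (k : Fin K)
    (σ : ℝ) (hσ : 0 < σ)
    (αs : ℝ) (βs : ℂ)
    (hαs : αs = ‖dotc f (w k)‖ ^ 2 /
      ((∑ j ∈ Finset.univ.erase k, ‖dotc f (w j)‖ ^ 2) + σ ^ 2))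
    (hβs : βs = (Real.sqrt (1 + αs) : ℂ) * dotc f (w k) /
      (((∑ j, ‖dotc f (w j)‖ ^ 2) + σ ^ 2 : ℝ) : ℂ)) :
    2 * Real.sqrt (1 + αs) * ((starRingEnd ℂ) βs * dotc f (w k)).re - αs -
        ‖βs‖ ^ 2 * ((∑ j, ‖dotc f (w j)‖ ^ 2) + σ ^ 2) +
        Real.log (1 + αs) =
      Real.log (1 +
        ‖dotc f (w k)‖ ^ 2 /
          ((∑ j ∈ Finset.univ.erase k, ‖dotc f (w j)‖ ^ 2) + σ ^ 2)) := by
  set c := dotc f (w k) with hc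
  set a := ‖c‖ ^ 2 with ha
  set D := (∑ j ∈ Finset.univ.erase k, ‖dotc f (w j)‖ ^ 2) + σ ^ 2 with hD
  set T := (∑ j, ‖dotc f (w j)‖ ^ 2) + σ ^ 2 with hT
  have ha0 : 0 ≤ a := sq_nonneg _
  have hD0 : 0 < D := by
    have : 0 ≤ ∑ j ∈ Finset.univ.erase k, ‖dotc f (w j)‖ ^ 2 := Finset.sum_nonneg fun _ _ => sq_nonneg _
    have := pow_pos hσ 2
    rw [hD]; linarith
  have hTDa : T = D + a := by
    rw [hT, hD, ha, hc, ← Finset.sum_erase_add _ _ (Finset.mem_univ k)]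
    ring
  have hT0 : 0 < T := by rw [hTDa]; linarith
  have hαa : αs = a / D := hαs
  have h1α : 1 + αs = T / D := by
    rw [hαa, hTDa]; field_simp
  have h1α0 : 0 ≤ 1 + αs := by
    rw [h1α]; exact le_of_lt (div_pos hT0 hD0)
  set s := Real.sqrt (1 + αs) with hs
  have hs2 : s ^ 2 = 1 + αs := Real.sq_sqrt h1α0
  have hre : ((starRingEnd ℂ) βs * c).re = s * a / T := by
    rw [hβs]
    have : (starRingEnd ℂ) ((s : ℂ) * c / (T : ℝ)) * c
        = ((s * (Complex.normSq c) / T : ℝ) : ℂ) := by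
      rw [map_div₀, map_mul]
      simp only [Complex.conj_ofReal]
      push_cast
      rw [div_mul_eq_mul_div, mul_assoc, mul_comm ((starRingEnd ℂ) c) c, Complex.mul_conj]
    rw [this, Complex.ofReal_re]
    rw [Complex.normSq_eq_norm_sq, ← ha]
  have habs : ‖βs‖ ^ 2 = s ^ 2 * a / T ^ 2 := by
    rw [hβs]
    rw [norm_div, norm_mul, Complex.norm_real, Complex.norm_real, Real.norm_eq_abs, Real.norm_eq_abs]
    rw [_root_.abs_of_nonneg (Real.sqrt_nonneg _), _root_.abs_of_pos hT0, ha]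
    rw [div_pow, mul_pow]
  rw [hre, habs]
  have key : 2 * s * (s * a / T) - αs - s ^ 2 * a / T ^ 2 * T = 0 := by
    have h1 : s * (s * a / T) = s ^ 2 * a / T := by ring
    have h2 : s ^ 2 * a / T ^ 2 * T = s ^ 2 * a / T := by
      field_simp
    have h3 : s ^ 2 * a / T = αs := by
      rw [hs2, h1α, hαa]
      field_simp
    linear_combination (2:ℝ) * h1 - h2 + h3
  rw [← hαa] at *
  linarith [key]
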